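/- Let k be an n×n positive semidefinite matrix with k(i,i) = 1 for all i, let (s₁,p₁),…,(sₙ,pₙ) ∈ ℂ² be distinct points, and suppose that the matrices ((4 − s_i·conj(s_j))·k(i,j)) and ((1 − p_i·conj(p_j))·k(i,j)) are positive semidefinite. Then k is strictly positive definite (invertible). -/

import Mathlib

open scoped ComplexOrder
open scoped Matrix

private lemma ker_closed {n : ℕ} {k : Matrix (Fin n) (Fin n) ℂ} (hk : k.PosSemidef)
    (f : Fin n → ℂ) (c : ℂ)
    (hM : (Matrix.of fun i j => (c - f i * (starRingEnd ℂ) (f j)) * k i j).PosSemidef)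
    (v : Fin n → ℂ) (hv : k *ᵥ v = 0) :
    k *ᵥ (fun i => (starRingEnd ℂ) (f i) * v i) = 0 := by
  set w : Fin n → ℂ := fun i => (starRingEnd ℂ) (f i) * v i with hw
  have h1 : star v ⬝ᵥ ((Matrix.of fun i j => (c - f i * (starRingEnd ℂ) (f j)) * k i j) *ᵥ v)
      = c * (star v ⬝ᵥ (k *ᵥ v)) - star w ⬝ᵥ (k *ᵥ w) := by
    simp only [dotProduct, Matrix.mulVec, Matrix.of_apply, Pi.star_apply, hw,
      starRingEnd_apply, star_mul', star_star, Finset.mul_sum]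
    rw [← Finset.sum_sub_distrib]
    refine Finset.sum_congr rfl fun i _ => ?_
    rw [← Finset.sum_sub_distrib]
    refine Finset.sum_congr rfl fun j _ => ?_
    ring
  have h2 : (0 : ℂ) ≤ star v ⬝ᵥ ((Matrix.of fun i j => (c - f i * (starRingEnd ℂ) (f j)) * k i j) *ᵥ v) := hM.dotProduct_mulVec_nonneg v
  rw [h1, hv, dotProduct_zero, mul_zero, zero_sub] at h2
  have h4 : star w ⬝ᵥ (k *ᵥ w) = 0 := le_antisymm (neg_nonneg.mp h2) (hk.dotProduct_mulVec_nonneg w)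
  exact (hk.dotProduct_mulVec_zero_iff w).mp h4

theorem stmt9 (n : ℕ) (k : Matrix (Fin n) (Fin n) ℂ) (hk : k.PosSemidef)
    (hdiag : ∀ i, k i i = 1)
    (lam : Fin n → ℂ × ℂ) (hlam : Function.Injective lam)
    (hs : (Matrix.of fun i j =>
      (4 - (lam i).1 * (starRingEnd ℂ) ((lam j).1)) * k i j).PosSemidef)
    (hp : (Matrix.of fun i j =>
      (1 - (lam i).2 * (starRingEnd ℂ) ((lam j).2)) * k i j).PosSemidef) :
    k.PosDef := by
  have cls : ∀ v, k *ᵥ v = 0 → k *ᵥ (fun i => (starRingEnd ℂ) ((lam i).1) * v i) = 0 :=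
    fun v hv => ker_closed hk (fun i => (lam i).1) 4 hs v hv
  have clp : ∀ v, k *ᵥ v = 0 → k *ᵥ (fun i => (starRingEnd ℂ) ((lam i).2) * v i) = 0 :=
    fun v hv => ker_closed hk (fun i => (lam i).2) 1 hp v hv
  have clsub : ∀ (v₁ v₂ : Fin n → ℂ), k *ᵥ v₁ = 0 → k *ᵥ v₂ = 0 → ∀ a : ℂ,
      k *ᵥ (v₁ - a • v₂) = 0 := by
    intro v₁ v₂ h1 h2 a
    rw [Matrix.mulVec_sub, Matrix.mulVec_smul, h1, h2, smul_zero, sub_zero]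
  have triv : ∀ v, k *ᵥ v = 0 → v = 0 := by
    intro v hv
    by_contra hne
    obtain ⟨i₀, hi₀⟩ := Function.ne_iff.mp hne
    simp only [Pi.zero_apply] at hi₀
    set ℓ : Fin n → Fin n → ℂ := fun j i =>
      if (lam j).1 ≠ (lam i₀).1 then (starRingEnd ℂ) ((lam i).1) - (starRingEnd ℂ) ((lam j).1)
      else (starRingEnd ℂ) ((lam i).2) - (starRingEnd ℂ) ((lam j).2) with hℓ
    have hℓjj : ∀ j, ℓ j j = 0 := by
      intro j
      by_cases h : (lam j).1 ≠ (lam i₀).1 <;> simp [hℓ, h]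
    have hℓji₀ : ∀ j, j ≠ i₀ → ℓ j i₀ ≠ 0 := by
      intro j hj
      have hne' : lam j ≠ lam i₀ := fun h => hj (hlam h)
      by_cases h1 : (lam j).1 ≠ (lam i₀).1
      · rw [hℓ]
        simp only [if_pos h1]
        exact sub_ne_zero.mpr fun h => h1 ((starRingEnd ℂ).injective h).symm
      · push_neg at h1
        have h2 : (lam j).2 ≠ (lam i₀).2 := fun h2 => hne' (Prod.ext h1 h2)
        rw [hℓ]
        simp only [h1, ne_eq, not_true_eq_false, if_false]
        exact sub_ne_zero.mpr fun h => h2 ((starRingEnd ℂ).injective h).symm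
    have prodker : ∀ F : Finset (Fin n), k *ᵥ (fun i => (∏ j ∈ F, ℓ j i) * v i) = 0 := by
      intro F
      induction F using Finset.induction_on with
      | empty => simpa using hv
      | @insert a F' hnotmem ih =>
        have heq : (fun i => (∏ j ∈ insert a F', ℓ j i) * v i)
            = (fun i => ℓ a i * ((∏ j ∈ F', ℓ j i) * v i)) := by
          funext i
          rw [Finset.prod_insert hnotmem]; ring
        rw [heq]
        set w : Fin n → ℂ := fun i => (∏ j ∈ F', ℓ j i) * v i with hwdef
        by_cases h1 : (lam a).1 ≠ (lam i₀).1
        · have heq2 : (fun i => ℓ a i * w i)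
              = (fun i => (starRingEnd ℂ) ((lam i).1) * w i)
                - ((starRingEnd ℂ) ((lam a).1)) • w := by
            funext i
            simp only [hℓ, if_pos h1, Pi.sub_apply, Pi.smul_apply, smul_eq_mul]
            ring
          rw [heq2]
          exact clsub _ _ (cls w ih) ih _
        · have heq2 : (fun i => ℓ a i * w i)
              = (fun i => (starRingEnd ℂ) ((lam i).2) * w i)
                - ((starRingEnd ℂ) ((lam a).2)) • w := by
            funext i
            simp only [hℓ, if_neg h1, Pi.sub_apply, Pi.smul_apply, smul_eq_mul]
            ring
          rw [heq2]
          exact clsub _ _ (clp w ih) ih _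
    have hker := prodker (Finset.univ.erase i₀)
    have hc0 : ∀ j, j ≠ i₀ → (∏ j' ∈ Finset.univ.erase i₀, ℓ j' j) = 0 := fun j hj =>
      Finset.prod_eq_zero (Finset.mem_erase.mpr ⟨hj, Finset.mem_univ j⟩) (hℓjj j)
    have hci₀ : (∏ j ∈ Finset.univ.erase i₀, ℓ j i₀) ≠ 0 :=
      Finset.prod_ne_zero_iff.mpr fun j hj => hℓji₀ j (Finset.mem_erase.mp hj).1
    have hfin := congrFun hker i₀
    simp only [Matrix.mulVec, dotProduct, Pi.zero_apply] at hfin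
    rw [Finset.sum_eq_single i₀] at hfin
    · rw [hdiag i₀, one_mul] at hfin
      exact (mul_ne_zero hci₀ hi₀) hfin
    · intro j _ hj
      rw [hc0 j hj, zero_mul, mul_zero]
    · intro h; exact absurd (Finset.mem_univ i₀) h
  refine Matrix.posDef_iff_dotProduct_mulVec.mpr ⟨hk.1, fun x hx => ?_⟩
  rcases lt_or_eq_of_le (hk.dotProduct_mulVec_nonneg x) with h | h
  · exact h
  · exact absurd (triv x ((hk.dotProduct_mulVec_zero_iff x).mp h.symm)) hx
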